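/- Let 0 ≤ α ≤ 1. There exist constants c, C > 0 depending only on α such that for every integer j ≥ 1 there exists a 2^{−j}-separated set 𝓔 ⊂ [1,2] with c·2^{jα} ≤ #𝓔 ≤ C·2^{jα}, 𝒜_α(𝓔; 2^{−j}) ≤ C, and Ã_α(𝓔; 2^{−j}) ≤ C. -/

import Mathlib

open MeasureTheory Metric Set ENNReal

noncomputable section

abbrev Ed (d : ℕ) : Type := EuclideanSpace ℝ (Fin d)

/-- Minimal number of open intervals of length `δ` needed to cover `E`. -/
def covN (E : Set ℝ) (δ : ℝ) : ℕ :=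
  sInf {n : ℕ | ∃ S : Finset ℝ, S.card = n ∧ E ⊆ ⋃ c ∈ S, Set.Ioo c (c + δ)}

/-- The Assouad characteristic `𝒜_α(E; δ)` (supremum over subintervals `I ⊆ [1,2]`
with `δ ≤ |I| ≤ 1` of `(δ/|I|)^α 𝒩(E ∩ I, δ)`). -/
def assouadChar (α : ℝ) (E : Set ℝ) (δ : ℝ) : ℝ :=
  sSup {r : ℝ | ∃ a b : ℝ, 1 ≤ a ∧ b ≤ 2 ∧ δ ≤ b - a ∧
    r = (δ / (b - a)) ^ α * (covN (E ∩ Set.Icc a b) δ : ℝ)}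

/-- Fourier transform: `f̂(ξ) = ∫ e^{-i x·ξ} f(x) dx`. -/
def ftr {d : ℕ} (f : Ed d → ℂ) (ξ : Ed d) : ℂ :=
  ∫ x : Ed d, Complex.exp (-Complex.I * ((inner ℝ x ξ : ℝ) : ℂ)) * f x

/-- Half-wave propagator `e^{ε i t √(−Δ)} f (x) = (2π)^{-d} ∫ e^{i(x·ξ + ε t |ξ|)} f̂(ξ) dξ`. -/
def waveProp {d : ℕ} (ε t : ℝ) (f : Ed d → ℂ) (x : Ed d) : ℂ :=
  (((2 * Real.pi) ^ d : ℝ) : ℂ)⁻¹ *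
    ∫ ξ : Ed d, Complex.exp (Complex.I * (((inner ℝ x ξ : ℝ) : ℂ) + ((ε * t * ‖ξ‖ : ℝ) : ℂ))) *
      ftr f ξ

/-- The annulus `𝔸_N`. -/
def ann (d : ℕ) (N : ℝ) : Set (Ed d) := {ξ | N / 2 ≤ ‖ξ‖ ∧ ‖ξ‖ ≤ 2 * N}

/-- The sector `{ξ : ξ/‖ξ‖ ∈ Θ, N/2 ≤ ‖ξ‖ ≤ 2N}`. -/
def sector (d : ℕ) (Θ : Set (Ed d)) (N : ℝ) : Set (Ed d) :=
  {ξ | ‖ξ‖⁻¹ • ξ ∈ Θ ∧ N / 2 ≤ ‖ξ‖ ∧ ‖ξ‖ ≤ 2 * N}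

/-- A spherical cap. -/
def IsCap {d : ℕ} (Θ : Set (Ed d)) : Prop :=
  ∃ (z : Ed d) (r : ℝ), Θ = Metric.sphere (0 : Ed d) 1 ∩ Metric.closedBall z r

/-- Mixed norm `‖F‖_{L^r(ℝ^d × 𝓔)}` over a finite time set `𝓔`. -/
def mixNormP {d : ℕ} (𝓔 : Finset ℝ) (r : ℝ≥0∞) (F : ℝ → Ed d → ℂ) : ℝ≥0∞ :=
  if r = ∞ then 𝓔.sup fun t => eLpNorm (F t) ∞ volume
  else (∑ t ∈ 𝓔, eLpNorm (F t) r volume ^ r.toReal) ^ (1 / r.toReal)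

/-- Normalized surface measure on the unit sphere `S^{d-1} ⊆ ℝ^d`. -/
def sphMeasure (d : ℕ) : Measure (Metric.sphere (0 : Ed d) 1) :=
  ((volume : Measure (Ed d)).toSphere Set.univ)⁻¹ • (volume : Measure (Ed d)).toSphere

/-- Spherical average `A_t f(x) = ∫_{S^{d-1}} f(x - t y) dσ(y)`. -/
def sphereAvg (d : ℕ) (t : ℝ) (f : Ed d → ℂ) (x : Ed d) : ℂ :=
  ∫ y : Metric.sphere (0 : Ed d) 1, f (x - t • (y : Ed d)) ∂(sphMeasure d)

/-- Maximal function `M_E f(x) = sup_{t ∈ E} |A_t f(x)|`. -/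
def maxFn (d : ℕ) (E : Set ℝ) (f : Ed d → ℂ) (x : Ed d) : ℝ :=
  ⨆ t ∈ E, ‖sphereAvg d t f x‖

/-- Adjoint restriction (extension) operator for the cone. -/
def extOp {d : ℕ} (g : Ed d → ℂ) (x : Ed d) (t : ℝ) : ℂ :=
  ∫ ξ : Ed d, Complex.exp (Complex.I * (((inner ℝ x ξ : ℝ) : ℂ) + ((t * ‖ξ‖ : ℝ) : ℂ))) * g ξ

/-- An `α`-sparse (with constant `C₀`) family of pairwise disjoint unit intervals,
encoded by the set `T` of left endpoints. -/
def SparseFamily (α C₀ : ℝ) (T : Set ℝ) : Prop :=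
  (∀ s ∈ T, ∀ s' ∈ T, s ≠ s' → 1 ≤ |s - s'|) ∧
  ∀ t r : ℝ, 1 ≤ r →
    {s ∈ T | (Set.Ico s (s + 1) ∩ Set.Ioo t (t + r)).Nonempty}.Finite ∧
    ({s ∈ T | (Set.Ico s (s + 1) ∩ Set.Ioo t (t + r)).Nonempty}).ncard ≤ C₀ * r ^ α

/-- The integer vector `k ∈ ℤ^d` as an element of `ℝ^d`. -/
def intVec {d : ℕ} (k : Fin d → ℤ) : Ed d :=
  (WithLp.equiv 2 ((i : Fin d) → ℝ)).symm fun i => (k i : ℝ)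

/-- `φ̃_θ(η) = θ^{-2}(√(1+θ²|η|²) − 1)` for `θ > 0`, and `φ̃₀(η) = |η|²/2`. -/
def phiT (θ : ℝ) {m : ℕ} (η : Ed m) : ℝ :=
  if θ = 0 then ‖η‖ ^ 2 / 2 else (Real.sqrt (1 + θ ^ 2 * ‖η‖ ^ 2) - 1) / θ ^ 2

/-- The operator `𝒯_θ h(x,t) = ∫ e^{i(x·ξ + t ξ₁ φ̃_θ(ξ'/ξ₁))} h(ξ) dξ`. -/
def TOp (θ : ℝ) {m : ℕ} (h : ℝ × Ed m → ℂ) (x : ℝ × Ed m) (t : ℝ) : ℂ :=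
  ∫ ξ : ℝ × Ed m, Complex.exp (Complex.I *
    ((x.1 * ξ.1 + (inner ℝ x.2 ξ.2 : ℝ) + t * ξ.1 * phiT θ (ξ.1⁻¹ • ξ.2) : ℝ) : ℂ)) * h ξ

namespace St16

/-- weight -/
def val (T : Finset ℕ) : ℝ := ∑ i ∈ T, (2⁻¹ : ℝ) ^ i

lemma val_nonneg (T : Finset ℕ) : 0 ≤ val T :=
  Finset.sum_nonneg fun i _ => by positivity

lemma val_mono {T T' : Finset ℕ} (h : T ⊆ T') : val T ≤ val T' :=
  Finset.sum_le_sum_of_subset_of_nonneg h (fun i _ _ => by positivity)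

lemma geom (m n : ℕ) (h : m ≤ n) :
    ∑ i ∈ Finset.Icc (m+1) n, ((2:ℝ)⁻¹) ^ i = (2⁻¹:ℝ)^m - (2⁻¹:ℝ)^n := by
  induction n, h using Nat.le_induction with
  | base => rw [Finset.Icc_eq_empty (by omega)]; simp
  | succ n hmn ih =>
      rw [Finset.sum_Icc_succ_top (by omega), ih]
      have h1 : (2⁻¹:ℝ)^(n+1) = 2⁻¹^n * 2⁻¹ := pow_succ _ _
      linarith

lemma tail_le {T : Finset ℕ} {m n : ℕ} (h : T ⊆ Finset.Icc (m+1) n) (hmn : m ≤ n) :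
    val T ≤ (2⁻¹:ℝ)^m - (2⁻¹:ℝ)^n := by
  rw [← geom m n hmn]
  exact Finset.sum_le_sum_of_subset_of_nonneg h (fun i _ _ => by positivity)

lemma tail_lt {T : Finset ℕ} {m n : ℕ} (h : T ⊆ Finset.Icc (m+1) n) :
    val T < (2⁻¹:ℝ)^m := by
  rcases le_or_gt (m+1) (n+1) with hmn | hmn
  · have h2 : (0:ℝ) < (2⁻¹:ℝ)^n := by positivity
    linarith [tail_le h (by omega : m ≤ n)]
  · have : T = ∅ := Finset.subset_empty.mp (by rwa [Finset.Icc_eq_empty (by omega)] at h)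
    rw [this]
    have : val ∅ = 0 := by simp [val]
    rw [this]
    positivity

lemma key {n : ℕ} {T T' : Finset ℕ} {i0 : ℕ}
    (hT' : T' ⊆ Finset.Icc 1 n) (hi0T : i0 ∈ T) (hi0T' : i0 ∉ T') (hi0n : i0 ≤ n)
    (hmin : ∀ i ∈ T', i ∉ T → i0 < i) :
    (2⁻¹:ℝ)^n ≤ val T - val T' := by
  have e1 : val (T \ (T ∩ T')) + val (T ∩ T') = val T := Finset.sum_sdiff Finset.inter_subset_left
  have e2 : val (T' \ (T' ∩ T)) + val (T' ∩ T) = val T' := Finset.sum_sdiff Finset.inter_subset_left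
  rw [Finset.sdiff_inter_self_left] at e1 e2
  have einter : val (T ∩ T') = val (T' ∩ T) := by rw [Finset.inter_comm]
  have h1 : (2⁻¹:ℝ)^i0 ≤ val (T \ T') :=
    Finset.single_le_sum (fun i _ => by positivity) (Finset.mem_sdiff.mpr ⟨hi0T, hi0T'⟩)
  have h2 : val (T' \ T) ≤ (2⁻¹:ℝ)^i0 - (2⁻¹:ℝ)^n := by
    apply tail_le _ hi0n
    intro i hi
    rw [Finset.mem_sdiff] at hi
    have := hmin i hi.1 hi.2
    have := (Finset.mem_Icc.mp (hT' hi.1)).2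
    exact Finset.mem_Icc.mpr ⟨by omega, this⟩
  linarith

lemma sep {n : ℕ} {T T' : Finset ℕ} (hT : T ⊆ Finset.Icc 1 n) (hT' : T' ⊆ Finset.Icc 1 n)
    (hne : T ≠ T') : (2⁻¹:ℝ)^n ≤ |val T - val T'| := by
  classical
  set D := (T \ T') ∪ (T' \ T) with hD
  have hDne : D.Nonempty := by
    rw [Finset.nonempty_iff_ne_empty]
    intro h
    apply hne
    have h1 : T \ T' = ∅ := Finset.union_eq_empty.mp h |>.1
    have h2 : T' \ T = ∅ := Finset.union_eq_empty.mp h |>.2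
    exact Finset.Subset.antisymm (Finset.sdiff_eq_empty_iff_subset.mp h1)
      (Finset.sdiff_eq_empty_iff_subset.mp h2)
  set i0 := D.min' hDne with hi0
  have hi0D : i0 ∈ D := Finset.min'_mem _ _
  have hmin : ∀ i ∈ D, i0 ≤ i := fun i hi => Finset.min'_le _ _ hi
  rw [Finset.mem_union] at hi0D
  rcases hi0D with h | h
  · rw [Finset.mem_sdiff] at h
    have hi0n : i0 ≤ n := (Finset.mem_Icc.mp (hT h.1)).2
    have := key hT' h.1 h.2 hi0n (fun i hi hni => by
      have h1 : i0 ≤ i := hmin i (Finset.mem_union_right _ (Finset.mem_sdiff.mpr ⟨hi, hni⟩))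
      rcases h1.lt_or_eq with h2 | h2
      · exact h2
      · exact absurd (h2 ▸ hi) h.2)
    exact this.trans (le_abs_self _)
  · rw [Finset.mem_sdiff] at h
    have hi0n : i0 ≤ n := (Finset.mem_Icc.mp (hT' h.1)).2
    have := key hT h.1 h.2 hi0n (fun i hi hni => by
      have h1 : i0 ≤ i := hmin i (Finset.mem_union_left _ (Finset.mem_sdiff.mpr ⟨hi, hni⟩))
      rcases h1.lt_or_eq with h2 | h2
      · exact h2
      · exact absurd (h2 ▸ hi) h.2)
    rw [abs_sub_comm]
    exact this.trans (le_abs_self _)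

end St16

namespace St16

/-- `f α m = ⌈α m⌉` -/
def cf (α : ℝ) (m : ℕ) : ℕ := ⌈α * m⌉₊

/-- digit positions -/
def P (α : ℝ) (i : ℕ) : Prop := cf α i ≠ cf α (i - 1)

instance (α : ℝ) : DecidablePred (P α) := fun i => instDecidableNot

lemma cf_zero (α : ℝ) : cf α 0 = 0 := by simp [cf]

lemma cf_mono {α : ℝ} (hα0 : 0 ≤ α) {m n : ℕ} (h : m ≤ n) : cf α m ≤ cf α n :=
  Nat.ceil_le_ceil (by
    apply mul_le_mul_of_nonneg_left _ hα0
    exact_mod_cast h)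

lemma cf_step {α : ℝ} (hα0 : 0 ≤ α) (hα1 : α ≤ 1) (n : ℕ) : cf α (n+1) ≤ cf α n + 1 := by
  have h1 : α * (↑(n+1) : ℝ) ≤ α * n + 1 := by
    push_cast
    nlinarith
  calc cf α (n+1) ≤ ⌈α * (n:ℝ) + 1⌉₊ := Nat.ceil_le_ceil h1
    _ = cf α n + 1 := Nat.ceil_add_one (by positivity)

lemma count {α : ℝ} (hα0 : 0 ≤ α) (hα1 : α ≤ 1) (M K : ℕ) (h : M ≤ K) :
    cf α M + ((Finset.Icc (M+1) K).filter (P α)).card = cf α K := by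
  induction K, h using Nat.le_induction with
  | base => rw [Finset.Icc_eq_empty (by omega)]; simp
  | succ K hMK ih =>
      have hins : (Finset.Icc (M+1) (K+1)).filter (P α)
          = if P α (K+1) then insert (K+1) ((Finset.Icc (M+1) K).filter (P α))
            else (Finset.Icc (M+1) K).filter (P α) := by
        have : Finset.Icc (M+1) (K+1) = insert (K+1) (Finset.Icc (M+1) K) := by
          ext i; simp [Finset.mem_Icc]; omega
        rw [this, Finset.filter_insert]
      have hnotmem : (K+1) ∉ (Finset.Icc (M+1) K).filter (P α) := by
        simp [Finset.mem_Icc]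
      have hmono := cf_mono hα0 (by omega : K ≤ K + 1)
      have hstep := cf_step hα0 hα1 K
      by_cases hp : P α (K+1)
      · rw [hins, if_pos hp, Finset.card_insert_of_notMem hnotmem]
        have : cf α (K+1) ≠ cf α K := by simpa [P] using hp
        omega
      · rw [hins, if_neg hp]
        have : cf α (K+1) = cf α K := by
          have := hp
          simp only [P, not_not] at this
          simpa using this
        omega

/-- the digit set -/
def Tset (α : ℝ) (j : ℕ) : Finset ℕ := (Finset.Icc 1 j).filter (P α)

lemma Tset_subset (α : ℝ) (j : ℕ) : Tset α j ⊆ Finset.Icc 1 j := Finset.filter_subset _ _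

lemma Tset_card {α : ℝ} (hα0 : 0 ≤ α) (hα1 : α ≤ 1) (j : ℕ) : (Tset α j).card = cf α j := by
  have := count hα0 hα1 0 j (Nat.zero_le j)
  rw [cf_zero] at this
  simpa [Tset] using this

/-- element of the Cantor set -/
def ev (T : Finset ℕ) : ℝ := 1 + val T

/-- The Cantor-type set -/
def Eset (α : ℝ) (j : ℕ) : Finset ℝ := (Tset α j).powerset.image ev

lemma ev_sep {n : ℕ} {T T' : Finset ℕ} (hT : T ⊆ Finset.Icc 1 n) (hT' : T' ⊆ Finset.Icc 1 n)
    (hne : T ≠ T') : (2⁻¹:ℝ)^n ≤ |ev T - ev T'| := by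
  have := sep hT hT' hne
  simpa [ev] using this

lemma ev_injOn (n : ℕ) : Set.InjOn ev {T : Finset ℕ | T ⊆ Finset.Icc 1 n} := by
  intro T hT T' hT' h
  by_contra hne
  have := ev_sep hT hT' hne
  rw [h, sub_self, abs_zero] at this
  have : (0:ℝ) < (2⁻¹:ℝ)^n := by positivity
  linarith

lemma Eset_card {α : ℝ} (hα0 : 0 ≤ α) (hα1 : α ≤ 1) (j : ℕ) :
    (Eset α j).card = 2 ^ (cf α j) := by
  rw [Eset, Finset.card_image_of_injOn, Finset.card_powerset, Tset_card hα0 hα1]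
  intro T hT T' hT' h
  exact ev_injOn j ((Finset.mem_powerset.mp (Finset.mem_coe.mp hT)).trans (Tset_subset α j))
    ((Finset.mem_powerset.mp (Finset.mem_coe.mp hT')).trans (Tset_subset α j)) h

end St16

namespace St16

lemma sep_count {F : Finset ℝ} {d u : ℝ} (hd : 0 < d)
    (hsep : ∀ y ∈ F, ∀ z ∈ F, y ≠ z → d ≤ |y - z|)
    (hsub : ∀ y ∈ F, u < y ∧ y ≤ u + 4*d) : F.card ≤ 4 := by
  have h4 : (Finset.Icc 1 4).card = 4 := by simp
  rw [← h4]
  apply Finset.card_le_card_of_injOn (fun y => ⌈(y - u)/d⌉₊)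
  · intro y hy
    have h1 := (hsub y hy).1
    have h2 := (hsub y hy).2
    have hp0 : 0 < (y - u)/d := div_pos (by linarith) hd
    have hp4 : (y - u)/d ≤ 4 := by rw [div_le_iff₀ hd]; linarith
    rw [Finset.mem_coe, Finset.mem_Icc]
    exact ⟨Nat.ceil_pos.mpr hp0, Nat.ceil_le.mpr (by exact_mod_cast hp4)⟩
  · intro y hy z hz heq
    by_contra hne
    have hd' := hsep y (Finset.mem_coe.mp hy) z (Finset.mem_coe.mp hz) hne
    set p := (y - u)/d with hp
    set q := (z - u)/d with hq
    have hp0 : 0 < p := div_pos (by linarith [(hsub y (Finset.mem_coe.mp hy)).1]) hd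
    have hq0 : 0 < q := div_pos (by linarith [(hsub z (Finset.mem_coe.mp hz)).1]) hd
    have h1 : p ≤ (⌈p⌉₊ : ℝ) := Nat.le_ceil p
    have h2 : (⌈p⌉₊ : ℝ) < p + 1 := Nat.ceil_lt_add_one hp0.le
    have h3 : q ≤ (⌈q⌉₊ : ℝ) := Nat.le_ceil q
    have h4' : (⌈q⌉₊ : ℝ) < q + 1 := Nat.ceil_lt_add_one hq0.le
    have hc : (⌈p⌉₊ : ℝ) = (⌈q⌉₊ : ℝ) := by exact_mod_cast heq
    have hlt : |p - q| < 1 := by rw [abs_sub_lt_iff]; constructor <;> linarith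
    have habs : |y - z| = |p - q| * d := by
      have hpq : p - q = (y - z)/d := by rw [hp, hq]; field_simp; ring
      rw [hpq, abs_div, abs_of_pos hd, div_mul_cancel₀ _ hd.ne']
    have hmul := mul_lt_mul_of_pos_right hlt hd
    rw [one_mul] at hmul
    rw [habs] at hd'
    linarith

lemma inv_pow_le_inv_pow {M m : ℕ} (h : M ≤ m) : (2⁻¹:ℝ)^m ≤ (2⁻¹:ℝ)^M :=
  pow_le_pow_of_le_one (by norm_num) (by norm_num) h

def g1 (M : ℕ) (U : Finset ℕ) : ℝ := ev (U.filter (· ≤ M))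
def g2 (M : ℕ) (U : Finset ℕ) : Finset ℕ := U.filter (fun i => ¬ i ≤ M)

set_option maxHeartbeats 2000000 in
lemma cover_bound (α : ℝ) (hα0 : 0 ≤ α) (hα1 : α ≤ 1) (j : ℕ) {a b δ' : ℝ}
    (hδ0 : 0 < δ') (hδ1 : δ' ≤ 1) (ha : 1 ≤ a) (hb : b ≤ 2) (hab : δ' ≤ b - a) :
    (δ' / (b - a)) ^ α * (covN ((↑(Eset α j) : Set ℝ) ∩ Set.Icc a b) δ' : ℝ) ≤ 32 := by
  classical
  set L := b - a with hLdef
  have hL0 : 0 < L := lt_of_lt_of_le hδ0 hab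
  have hL1 : L ≤ 1 := by rw [hLdef]; linarith
  set e : ℤ := Int.log 2 L with he
  have he0 : e ≤ 0 := by
    have h := Int.log_mono_right (b := 2) hL0 hL1
    rwa [Int.log_one_right] at h
  set M : ℕ := (-e).toNat with hMdef
  have hMe : (M:ℤ) = -e := Int.toNat_of_nonneg (by omega)
  have hpowM : (2⁻¹:ℝ)^M = (2:ℝ)^e := by
    rw [inv_pow, ← zpow_natCast, hMe, ← zpow_neg, neg_neg]
  have hM1 : (2⁻¹:ℝ)^M ≤ L := by
    rw [hpowM]; exact Int.zpow_log_le_self (by norm_num) hL0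
  have hM2 : L < 2 * (2⁻¹:ℝ)^M := by
    have h : L < (2:ℝ)^(e+1) := by
      rw [he]; exact_mod_cast Int.lt_zpow_succ_log_self (b := 2) (by norm_num) L
    rw [zpow_add₀ (by norm_num : (2:ℝ) ≠ 0) e 1, zpow_one, ← hpowM] at h
    linarith
  set e' : ℤ := Int.log 2 δ' with he'
  have he'0 : e' ≤ 0 := by
    have h := Int.log_mono_right (b := 2) hδ0 hδ1
    rwa [Int.log_one_right] at h
  set m' : ℕ := (1 - e').toNat with hm'def
  have hm'e : (m':ℤ) = 1 - e' := Int.toNat_of_nonneg (by omega)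
  have hpowm' : (2⁻¹:ℝ)^m' = (2:ℝ)^(e' - 1) := by
    rw [inv_pow, ← zpow_natCast, hm'e, ← zpow_neg]
    norm_num
  have hm1 : 2 * (2⁻¹:ℝ)^m' ≤ δ' := by
    have h : (2:ℝ)^e' ≤ δ' := by
      rw [he']; exact_mod_cast Int.zpow_log_le_self (b := 2) (r := δ') (by norm_num) hδ0
    have h2 : (2:ℝ)^e' = 2 * (2:ℝ)^(e'-1) := by
      rw [← zpow_one_add₀ (by norm_num : (2:ℝ) ≠ 0) (e'-1)]
      congr 1
      ring
    rw [h2] at h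
    rw [hpowm']
    linarith
  have hm2 : δ' < 4 * (2⁻¹:ℝ)^m' := by
    have h : δ' < (2:ℝ)^(e'+1) := by
      rw [he']; exact_mod_cast Int.lt_zpow_succ_log_self (b := 2) (by norm_num) δ'
    have h2 : (2:ℝ)^(e'+1) = 4 * (2:ℝ)^(e'-1) := by
      rw [show e'+1 = 2 + (e'-1) by ring, zpow_add₀ (by norm_num : (2:ℝ) ≠ 0)]
      norm_num
    rw [h2] at h
    rw [hpowm']
    linarith
  have hMm' : M < m' := by
    by_contra hc
    push_neg at hc
    have := inv_pow_le_inv_pow hc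
    linarith
  set D : Finset ℕ := (Tset α j).filter (· ≤ m') with hDdef
  set B : Finset (Finset ℕ) :=
    D.powerset.filter (fun U => a - (2⁻¹:ℝ)^m' < ev U ∧ ev U ≤ b) with hBdef
  have hDsub : ∀ i ∈ D, (1 ≤ i ∧ i ≤ j ∧ i ≤ m') ∧ P α i := by
    intro i hi
    rw [hDdef, Finset.mem_filter] at hi
    have h2 := Finset.mem_Icc.mp (Tset_subset α j hi.1)
    have h3 := (Finset.mem_filter.mp hi.1).2
    exact ⟨⟨h2.1, h2.2, hi.2⟩, h3⟩
  -- step 1 : covN ≤ B.card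
  have hcov : covN ((↑(Eset α j) : Set ℝ) ∩ Set.Icc a b) δ' ≤ B.card := by
    have h1 : covN ((↑(Eset α j) : Set ℝ) ∩ Set.Icc a b) δ'
        ≤ (B.image (fun U => ev U - (2⁻¹:ℝ)^m')).card := by
      apply Nat.sInf_le
      refine ⟨_, rfl, ?_⟩
      rintro x ⟨hxE, hxab⟩
      rw [Finset.mem_coe, Eset, Finset.mem_image] at hxE
      obtain ⟨T, hTmem, hTx⟩ := hxE
      have hTsub : T ⊆ Tset α j := Finset.mem_powerset.mp hTmem
      set U : Finset ℕ := T.filter (· ≤ m') with hUdef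
      have hUD : U ⊆ D := by
        intro i hi
        rw [hUdef, Finset.mem_filter] at hi
        rw [hDdef, Finset.mem_filter]
        exact ⟨hTsub hi.1, hi.2⟩
      have hUT : val U ≤ val T := val_mono (Finset.filter_subset _ _)
      have hsplit : val U + val (T.filter (fun i => ¬ i ≤ m')) = val T := by
        simpa [val] using Finset.sum_filter_add_sum_filter_not T (fun i => i ≤ m') (fun i => (2⁻¹:ℝ)^i)
      have htail : val T - val U < (2⁻¹:ℝ)^m' := by
        have hlt : val (T.filter (fun i => ¬ i ≤ m')) < (2⁻¹:ℝ)^m' := by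
          apply tail_lt (n := j)
          intro i hi
          rw [Finset.mem_filter] at hi
          have h2 := Finset.mem_Icc.mp (Tset_subset α j (hTsub hi.1))
          rw [Finset.mem_Icc]
          exact ⟨by omega, h2.2⟩
        linarith
      have hax : a ≤ ev T := by rw [hTx]; exact (Set.mem_Icc.mp hxab).1
      have hbx : ev T ≤ b := by rw [hTx]; exact (Set.mem_Icc.mp hxab).2
      have hUB : U ∈ B := by
        rw [hBdef, Finset.mem_filter]
        refine ⟨Finset.mem_powerset.mpr hUD, ?_, ?_⟩
        · simp only [ev] at *; linarith
        · simp only [ev] at *; linarith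
      simp only [Set.mem_iUnion]
      refine ⟨ev U - (2⁻¹:ℝ)^m', Finset.mem_coe.mpr (Finset.mem_image_of_mem _ hUB), ?_⟩
      rw [Set.mem_Ioo]
      constructor
      · simp only [ev] at *
        have hp : (0:ℝ) < (2⁻¹:ℝ)^m' := by positivity
        linarith
      · simp only [ev] at *; linarith
    calc covN _ δ' ≤ _ := h1
      _ ≤ B.card := Finset.card_image_le
  -- step 2 : B.card ≤ 4 * 2^cnum
  set cnum := ((Finset.Icc (M+1) m').filter (P α)).card with hcnumdef
  have hfsub : ∀ V ∈ B, V.filter (· ≤ M) ⊆ Finset.Icc 1 M := by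
    intro V hV i hi
    rw [Finset.mem_filter] at hi
    have h1 := hDsub i ((Finset.mem_powerset.mp (Finset.mem_filter.mp hV).1) hi.1)
    rw [Finset.mem_Icc]
    exact ⟨h1.1.1, hi.2⟩
  have hcard : B.card ≤ 4 * 2 ^ cnum := by
    have hinj : B.card ≤ ((B.image (g1 M)) ×ˢ (B.image (g2 M))).card := by
      apply Finset.card_le_card_of_injOn (fun U => (g1 M U, g2 M U))
      · intro U hU
        exact Finset.mem_product.mpr
          ⟨Finset.mem_image_of_mem _ hU, Finset.mem_image_of_mem _ hU⟩
      · intro U hU U' hU' h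
        have h1 : g1 M U = g1 M U' := congrArg Prod.fst h
        have h2 : g2 M U = g2 M U' := congrArg Prod.snd h
        have hUU' : U.filter (· ≤ M) = U'.filter (· ≤ M) :=
          ev_injOn M (hfsub U (Finset.mem_coe.mp hU)) (hfsub U' (Finset.mem_coe.mp hU')) h1
        have e1 := Finset.filter_union_filter_not_eq (fun i => i ≤ M) U
        have e2 := Finset.filter_union_filter_not_eq (fun i => i ≤ M) U'
        rw [← e1, ← e2, hUU']
        rw [g2] at h2
        rw [show (U.filter (fun i => ¬ i ≤ M)) = (U'.filter (fun i => ¬ i ≤ M)) from h2]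
    have hA2 : (B.image (g2 M)).card ≤ 2 ^ cnum := by
      have hsub2 : B.image (g2 M) ⊆ ((Finset.Icc (M+1) m').filter (P α)).powerset := by
        intro V hV
        rw [Finset.mem_image] at hV
        obtain ⟨U, hU, rfl⟩ := hV
        rw [Finset.mem_powerset]
        intro i hi
        rw [g2, Finset.mem_filter] at hi
        have hD := hDsub i ((Finset.mem_powerset.mp (Finset.mem_filter.mp hU).1) hi.1)
        rw [Finset.mem_filter, Finset.mem_Icc]
        exact ⟨⟨by omega, hD.1.2.2⟩, hD.2⟩
      calc (B.image (g2 M)).card ≤ _ := Finset.card_le_card hsub2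
        _ = 2 ^ cnum := by rw [Finset.card_powerset]
    have hA1 : (B.image (g1 M)).card ≤ 4 := by
      apply sep_count (d := (2⁻¹:ℝ)^M) (u := a - 2*(2⁻¹:ℝ)^M) (by positivity)
      · intro y hy z hz hyz
        rw [Finset.mem_image] at hy hz
        obtain ⟨U, hU, rfl⟩ := hy
        obtain ⟨U', hU', rfl⟩ := hz
        exact ev_sep (hfsub U hU) (hfsub U' hU') (fun hVV => hyz (by rw [g1, g1, hVV]))
      · intro y hy
        rw [Finset.mem_image] at hy
        obtain ⟨U, hU, rfl⟩ := hy
        have hUB := Finset.mem_filter.mp hU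
        have hUpow := Finset.mem_powerset.mp hUB.1
        have hsplit : val (U.filter (· ≤ M)) + val (U.filter (fun i => ¬ i ≤ M)) = val U := by
          simpa [val] using Finset.sum_filter_add_sum_filter_not U (fun i => i ≤ M) (fun i => (2⁻¹:ℝ)^i)
        have htail : val (U.filter (fun i => ¬ i ≤ M)) < (2⁻¹:ℝ)^M := by
          apply tail_lt (n := m')
          intro i hi
          rw [Finset.mem_filter] at hi
          have h1 := hDsub i (hUpow hi.1)
          rw [Finset.mem_Icc]
          omega
        have h1 := hUB.2.1
        have h2 := hUB.2.2
        have hm'M : (2⁻¹:ℝ)^m' ≤ (2⁻¹:ℝ)^M := inv_pow_le_inv_pow hMm'.le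
        have hmono : val (U.filter (· ≤ M)) ≤ val U := val_mono (Finset.filter_subset _ _)
        constructor
        · rw [g1]; simp only [ev] at *; linarith
        · rw [g1]; simp only [ev] at *; linarith
    calc B.card ≤ _ := hinj
      _ = (B.image (g1 M)).card * (B.image (g2 M)).card := Finset.card_product _ _
      _ ≤ 4 * 2 ^ cnum := Nat.mul_le_mul hA1 hA2
  -- step 3 : arithmetic
  have hcnt := count hα0 hα1 M m' hMm'.le
  have hcovR : (covN ((↑(Eset α j) : Set ℝ) ∩ Set.Icc a b) δ' : ℝ) ≤ 4 * 2 ^ cnum := by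
    exact_mod_cast le_trans hcov hcard
  have hrpow_pos : 0 < (δ' / L) ^ α := Real.rpow_pos_of_pos (div_pos hδ0 hL0) α
  set X : ℝ := (2:ℝ) ^ ((m':ℝ) - (M:ℝ)) with hX
  have hX0 : 0 < X := Real.rpow_pos_of_pos (by norm_num) _
  have hXeq : X = (2⁻¹:ℝ)^M / (2⁻¹:ℝ)^m' := by
    rw [hX, Real.rpow_sub (by norm_num), Real.rpow_natCast, Real.rpow_natCast,
      inv_pow, inv_pow]
    field_simp
  have hXle : X ≤ 4 * L / δ' := by
    rw [hXeq, div_le_div_iff₀ (by positivity) hδ0]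
    nlinarith [hM1, hm2, pow_pos (by norm_num : (0:ℝ) < 2⁻¹) m', hδ0.le,
      pow_pos (by norm_num : (0:ℝ) < 2⁻¹) M]
  have h2c : (2:ℝ) ^ cnum ≤ 2 * X ^ α := by
    have hc1 : (cnum:ℝ) ≤ α * ((m':ℝ) - (M:ℝ)) + 1 := by
      have e1 : (cf α M : ℝ) + (cnum:ℝ) = (cf α m' : ℝ) := by exact_mod_cast hcnt
      have e2 : (cf α m' : ℝ) < α * m' + 1 := Nat.ceil_lt_add_one (by positivity)
      have e3 : α * M ≤ (cf α M : ℝ) := Nat.le_ceil _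
      nlinarith
    calc (2:ℝ)^cnum = (2:ℝ)^((cnum:ℝ)) := (Real.rpow_natCast 2 cnum).symm
      _ ≤ (2:ℝ)^(α * ((m':ℝ) - (M:ℝ)) + 1) := Real.rpow_le_rpow_of_exponent_le one_le_two hc1
      _ = 2 * X ^ α := by
          rw [Real.rpow_add (by norm_num), Real.rpow_one, hX,
            mul_comm α ((m':ℝ) - (M:ℝ)), Real.rpow_mul (by norm_num : (0:ℝ) ≤ 2)]
          ring
  have hXα : (δ' / L)^α * X^α ≤ 4 := by
    rw [← Real.mul_rpow (by positivity) hX0.le]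
    have hle : δ' / L * X ≤ 4 := by
      have heq4 : δ' / L * (4 * L / δ') = 4 := by field_simp
      calc δ' / L * X ≤ δ' / L * (4 * L / δ') :=
            mul_le_mul_of_nonneg_left hXle (by positivity)
        _ = 4 := heq4
    calc (δ'/L*X)^α ≤ (4:ℝ)^α := Real.rpow_le_rpow (by positivity) hle hα0
      _ ≤ (4:ℝ)^(1:ℝ) := Real.rpow_le_rpow_of_exponent_le (by norm_num) hα1
      _ = 4 := Real.rpow_one 4
  have hXαpos : 0 < X ^ α := Real.rpow_pos_of_pos hX0 α
  calc (δ' / L) ^ α * (covN ((↑(Eset α j) : Set ℝ) ∩ Set.Icc a b) δ' : ℝ)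
      ≤ (δ' / L) ^ α * (4 * 2 ^ cnum) := mul_le_mul_of_nonneg_left hcovR hrpow_pos.le
    _ ≤ (δ' / L) ^ α * (4 * (2 * X ^ α)) := by nlinarith
    _ = 8 * ((δ' / L)^α * X^α) := by ring
    _ ≤ 8 * 4 := by linarith
    _ = 32 := by norm_num

end St16

/-- existence of Cantor-type `2^{-j}`-separated sets with bounded
Assouad characteristics (Lemma 4.1). -/
theorem stmt16 (α : ℝ) (hα0 : 0 ≤ α) (hα1 : α ≤ 1) :
    ∃ c C : ℝ, 0 < c ∧ 0 < C ∧
      ∀ j : ℕ, 1 ≤ j →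
        ∃ 𝓔 : Finset ℝ, (𝓔 : Set ℝ) ⊆ Set.Icc 1 2 ∧
          (∀ s ∈ 𝓔, ∀ t ∈ 𝓔, s ≠ t → (2 : ℝ) ^ (-(j : ℝ)) ≤ |s - t|) ∧
          c * 2 ^ ((j : ℝ) * α) ≤ (𝓔.card : ℝ) ∧
          (𝓔.card : ℝ) ≤ C * 2 ^ ((j : ℝ) * α) ∧
          assouadChar α (𝓔 : Set ℝ) ((2 : ℝ) ^ (-(j : ℝ))) ≤ C ∧
          ∀ δ' : ℝ, (2 : ℝ) ^ (-(j : ℝ)) ≤ δ' → δ' < 1 →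
            assouadChar α (𝓔 : Set ℝ) δ' ≤ C := by
  classical
  refine ⟨1, 32, one_pos, by norm_num, ?_⟩
  intro j hj
  have hδj : (2 : ℝ) ^ (-(j : ℝ)) = (2⁻¹:ℝ)^j := by
    rw [Real.rpow_neg (by norm_num), Real.rpow_natCast, inv_pow]
  have hδ0 : (0:ℝ) < (2 : ℝ) ^ (-(j : ℝ)) := Real.rpow_pos_of_pos (by norm_num) _
  have hδ1 : (2 : ℝ) ^ (-(j : ℝ)) ≤ 1 := by
    rw [hδj]
    exact pow_le_one₀ (by norm_num) (by norm_num)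
  refine ⟨St16.Eset α j, ?_, ?_, ?_, ?_, ?_, ?_⟩
  · -- subset of [1,2]
    intro x hx
    rw [Finset.mem_coe, St16.Eset, Finset.mem_image] at hx
    obtain ⟨T, hT, rfl⟩ := hx
    have hTsub : T ⊆ Finset.Icc 1 j :=
      (Finset.mem_powerset.mp hT).trans (St16.Tset_subset α j)
    have h1 : St16.val T ≤ (2⁻¹:ℝ)^0 - (2⁻¹:ℝ)^j := St16.tail_le hTsub (Nat.zero_le j)
    have h2 : (0:ℝ) ≤ (2⁻¹:ℝ)^j := by positivity
    have h0 := St16.val_nonneg T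
    simp only [pow_zero] at h1
    constructor
    · simp only [St16.ev]; linarith
    · simp only [St16.ev]; linarith
  · -- separation
    intro s hs t ht hst
    rw [St16.Eset, Finset.mem_image] at hs ht
    obtain ⟨T, hT, rfl⟩ := hs
    obtain ⟨T', hT', rfl⟩ := ht
    have hTsub : T ⊆ Finset.Icc 1 j :=
      (Finset.mem_powerset.mp hT).trans (St16.Tset_subset α j)
    have hT'sub : T' ⊆ Finset.Icc 1 j :=
      (Finset.mem_powerset.mp hT').trans (St16.Tset_subset α j)
    rw [hδj]
    exact St16.ev_sep hTsub hT'sub (fun h => hst (by rw [h]))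
  · -- lower card bound
    have hcard : ((St16.Eset α j).card : ℝ) = (2:ℝ) ^ (St16.cf α j) := by
      rw [St16.Eset_card hα0 hα1]
      push_cast
      ring
    rw [hcard, one_mul, ← Real.rpow_natCast 2 (St16.cf α j)]
    apply Real.rpow_le_rpow_of_exponent_le one_le_two
    have := Nat.le_ceil (α * (j:ℝ))
    calc (j:ℝ) * α = α * j := mul_comm _ _
      _ ≤ ((St16.cf α j : ℕ) : ℝ) := this
  · -- upper card bound
    have hcard : ((St16.Eset α j).card : ℝ) = (2:ℝ) ^ (St16.cf α j) := by
      rw [St16.Eset_card hα0 hα1]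
      push_cast
      ring
    rw [hcard, ← Real.rpow_natCast 2 (St16.cf α j)]
    have h1 : ((St16.cf α j : ℕ) : ℝ) < α * (j:ℝ) + 1 := Nat.ceil_lt_add_one (by positivity)
    calc (2:ℝ) ^ ((St16.cf α j : ℕ) : ℝ) ≤ (2:ℝ) ^ (α * (j:ℝ) + 1) :=
        Real.rpow_le_rpow_of_exponent_le one_le_two h1.le
      _ = 2 * (2:ℝ) ^ ((j:ℝ) * α) := by
          rw [Real.rpow_add (by norm_num), Real.rpow_one, mul_comm α ((j:ℝ))]
          ring
      _ ≤ 32 * 2 ^ ((j:ℝ) * α) := by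
          have : (0:ℝ) < (2:ℝ) ^ ((j:ℝ) * α) := Real.rpow_pos_of_pos (by norm_num) _
          nlinarith
  · -- 𝒜 bound
    apply Real.sSup_le _ (by norm_num)
    rintro r ⟨a, b, ha, hb, hab, rfl⟩
    exact St16.cover_bound α hα0 hα1 j hδ0 hδ1 ha hb hab
  · -- 𝒜 tilde bound
    intro δ' hδ'1 hδ'2
    apply Real.sSup_le _ (by norm_num)
    rintro r ⟨a, b, ha, hb, hab, rfl⟩
    exact St16.cover_bound α hα0 hα1 j (lt_of_lt_of_le hδ0 hδ'1) hδ'2.le ha hb hab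

end
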